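/- arXiv:1509.07207 — 4 statements merged into one kernel-verified Lean document; each statement's English description precedes it below -/
import Mathlib

section
/- Let G be a parity game and let ρ̄ be the least game parity progress measure of G. The positional strategy σ for player Even defined by choosing, for each v ∈ V_Even with ρ̄(v) ≠ ⊤, a successor w ∈ post(v) with ρ̄(w) ≤ ρ̄(w′) for all w′ ∈ post(v), is a winning strategy for Even from every vertex v with ρ̄(v) ≠ ⊤. -/
open Classical

noncomputable section

instance (priority := 5000) (n : ℕ) : WellFoundedLT (Fin n) :=
  Finite.to_wellFoundedLT

noncomputable instance (priority := 5000) (n : ℕ) : LinearOrder (Lex (Fin n → ℕ)) :=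
  inferInstance

/-- Least element of a set, if it exists; otherwise a default value. -/
def sLeast {α : Type*} [Preorder α] (s : Set α) (dflt : α) : α :=
  if h : ∃ a, IsLeast s a then h.choose else dflt

/-- Greatest element of a set, if it exists; otherwise a default value. -/
def sGreatest {α : Type*} [Preorder α] (s : Set α) (dflt : α) : α :=
  if h : ∃ a, IsGreatest s a then h.choose else dflt

/-- A parity game: a finite set of vertices with a total edge relation, a priority
function and an ownership function (`ownerEven v = true` iff `v ∈ V_Even`). -/
structure ParityGame (V : Type*) [Fintype V] where
  E : V → V → Prop
  total : ∀ v, ∃ w, E v w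
  prio : V → ℕ
  ownerEven : V → Bool

namespace ParityGame

variable {V : Type*} [Fintype V] [DecidableEq V] (G : ParityGame V)

/-- `d` is one plus the maximal priority occurring in the game. -/
def d : ℕ := (Finset.univ.sup G.prio) + 1

/-- The domain of (extended) measures: `⊤` together with `d`-tuples of naturals,
ordered lexicographically with `⊤` maximal.  This is `M_Even_ext` (together with
tuples that are nonzero at even positions, which are never used). -/
abbrev Meas : Type _ := WithTop (Lex (Fin G.d → ℕ))

/-- `nP i` is the number of vertices of priority `i`. -/
def nP (i : ℕ) : ℕ := (Finset.univ.filter (fun v => G.prio v = i)).card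

/-- Membership in `M_Even`: `⊤`, or a `d`-tuple which is `0` at even positions and
bounded by `nP i` at odd positions `i`. -/
def inMEven (m : G.Meas) : Prop :=
  m = ⊤ ∨ ∃ f : Fin G.d → ℕ, m = ((toLex f : Lex (Fin G.d → ℕ)) : G.Meas) ∧
    ∀ i : Fin G.d, (Even (i : ℕ) → f i = 0) ∧ (¬ Even (i : ℕ) → f i ≤ G.nP (i : ℕ))

/-- Membership in `M_Even_ext`: `⊤`, or a `d`-tuple which is `0` at even positions. -/
def inMEvenExt (m : G.Meas) : Prop :=
  m = ⊤ ∨ ∃ f : Fin G.d → ℕ, m = ((toLex f : Lex (Fin G.d → ℕ)) : G.Meas) ∧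
    ∀ i : Fin G.d, Even (i : ℕ) → f i = 0

/-- Truncation of a measure to components `0, …, k` (other components set to `0`);
`⊤` is mapped to `⊤`. -/
def trunc (k : ℕ) (m : G.Meas) : G.Meas :=
  WithTop.map (fun f : Lex (Fin G.d → ℕ) => toLex (fun j : Fin G.d => if (j : ℕ) ≤ k then ofLex f j else 0)) m

/-- `a ≥_k b` : comparison of measures on components `0, …, k` only. -/
def geAt (k : ℕ) (a b : G.Meas) : Prop := G.trunc k b ≤ G.trunc k a

/-- `a >_k b` : strict comparison of measures on components `0, …, k` only. -/
def gtAt (k : ℕ) (a b : G.Meas) : Prop := G.trunc k b < G.trunc k a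

/-- The defining condition of `Prog(ρ,v,w)`. -/
def progCond (ρ : V → G.Meas) (v w : V) (m : G.Meas) : Prop :=
  if Even (G.prio v) then G.geAt (G.prio v) m (ρ w)
  else (G.gtAt (G.prio v) m (ρ w) ∨ (m = ⊤ ∧ ρ w = ⊤))

/-- `Prog(ρ,v,w)`: the least element of `M_Even` satisfying `progCond`. -/
def Prog (ρ : V → G.Meas) (v w : V) : G.Meas :=
  if h : ∃ m, IsLeast {m | G.inMEven m ∧ G.progCond ρ v w m} m then h.choose else ⊤

/-- `ρ` takes values in `M_Even`. -/
def IsMeasure (ρ : V → G.Meas) : Prop := ∀ v, G.inMEven (ρ v)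

/-- Game parity progress measure. -/
def IsGPM (ρ : V → G.Meas) : Prop :=
  G.IsMeasure ρ ∧ ∀ v,
    (G.ownerEven v = true → ∃ w, G.E v w ∧ G.geAt (G.prio v) (ρ v) (G.Prog ρ v w)) ∧
    (G.ownerEven v = false → ∀ w, G.E v w → G.geAt (G.prio v) (ρ v) (G.Prog ρ v w))

/-- A play: an infinite `E`-path. -/
def IsPlay (π : ℕ → V) : Prop := ∀ n, G.E (π n) (π (n + 1))

/-- Priority `p` occurs infinitely often on `π`. -/
def InfOft (π : ℕ → V) (p : ℕ) : Prop := ∀ N, ∃ n, N ≤ n ∧ G.prio (π n) = p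

/-- A play is won by Even iff the least priority occurring infinitely often is even. -/
def WonByEven (π : ℕ → V) : Prop := Even (sInf {p | G.InfOft π p})

/-- Won by player `i` (`true` = Even, `false` = Odd). -/
def WonBy (i : Bool) (π : ℕ → V) : Prop :=
  if i then G.WonByEven π else ¬ G.WonByEven π

/-- The history of a play before time `n`. -/
def hist (π : ℕ → V) (n : ℕ) : List V := List.ofFn (fun k : Fin n => π (k : ℕ))

/-- A (history-dependent) strategy for player `i` is valid if it always moves along edges
from vertices of player `i`. -/
def ValidStrat (i : Bool) (σ : List V → V → V) : Prop :=
  ∀ h v, G.ownerEven v = i → G.E v (σ h v)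

/-- Consistency of a play with a history-dependent strategy of player `i`. -/
def ConsH (i : Bool) (σ : List V → V → V) (π : ℕ → V) : Prop :=
  ∀ n, G.ownerEven (π n) = i → π (n + 1) = σ (hist π n) (π n)

/-- Consistency of a play with a positional strategy of player `i`. -/
def ConsP (i : Bool) (σ : V → V) (π : ℕ → V) : Prop :=
  ∀ n, G.ownerEven (π n) = i → π (n + 1) = σ (π n)

/-- Winning region of player `i`: vertices from which `i` has a winning strategy. -/
def WinRegion (i : Bool) : Set V :=
  {v | ∃ σ : List V → V → V, G.ValidStrat i σ ∧
    ∀ π, G.IsPlay π → π 0 = v → G.ConsH i σ π → G.WonBy i π}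

/-- The `i`-attractor into `U`. -/
def Attr (i : Bool) (U : Set V) : Set V :=
  ⋂₀ {A | U ⊆ A ∧
    (∀ v, G.ownerEven v = i → (∃ w, G.E v w ∧ w ∈ A) → v ∈ A) ∧
    (∀ v, G.ownerEven v ≠ i → (∀ w, G.E v w → w ∈ A) → v ∈ A)}

/-- The guarded attractor `Attr^{≥k}_{Odd,W}(U)`. -/
def GAttr (k : ℕ) (W U : Set V) : Set V :=
  ⋂₀ {A | U ⊆ A ∧ A ⊆ W ∩ {v | k ≤ G.prio v} ∧
    ∀ u ∈ W ∩ {v | k ≤ G.prio v},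
      (G.ownerEven u = false → (∃ w, G.E u w ∧ w ∈ A) → u ∈ A) ∧
      (G.ownerEven u = true → (∀ w, G.E u w → w ∈ W → w ∈ A) → u ∈ A)}

/-- The lifting operator `Lift(ρ, v)`. -/
def Lift (ρ : V → G.Meas) (v : V) : V → G.Meas :=
  Function.update ρ v
    (if G.ownerEven v = true
      then max (ρ v) (sLeast {m | ∃ w, G.E v w ∧ m = G.Prog ρ v w} ⊤)
      else max (ρ v) (sGreatest {m | ∃ w, G.E v w ∧ m = G.Prog ρ v w} ⊤))

/-- The all-zero measure. -/
def zeroMeas : G.Meas := ((toLex (fun _ : Fin G.d => 0) : Lex (Fin G.d → ℕ)) : G.Meas)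

/-- A lifting sequence `ρ₀, …, ρ_N` in which `v` is the first vertex lifted to `⊤`. -/
def FirstTop (ρs : ℕ → V → G.Meas) (N : ℕ) (v : V) : Prop :=
  (∀ u, ρs 0 u = G.zeroMeas) ∧
  (∀ j < N, ∃ u, ρs (j + 1) = G.Lift (ρs j) u ∧
    (∀ w, ρs j w ≤ ρs (j + 1) w) ∧ ρs j ≠ ρs (j + 1)) ∧
  (∀ j < N, ∀ w, ρs j w ≠ ⊤) ∧
  ρs N v = ⊤

/-- The prefix `π 0 … π l` of a play is an `i`-dominated stretch. -/
def domStretchPrefix (π : ℕ → V) (i l : ℕ) : Prop :=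
  (∀ m ≤ l, i ≤ G.prio (π m)) ∧ (∃ m ≤ l, G.prio (π m) = i)

/-- The degree of the prefix `π 0 … π l` with respect to priority `i`: the number of
its vertices of priority `i`. -/
def degree (π : ℕ → V) (i l : ℕ) : ℕ :=
  ((Finset.range (l + 1)).filter (fun m => G.prio (π m) = i)).card

/-- The value `θ(π)` of a play: `⊤` if `π` is won by Odd, and otherwise the tuple whose
component at each odd position `i` is the degree of the maximal `i`-dominated stretch
that is a prefix of `π` (and `0` if there is no such prefix). -/
def theta (π : ℕ → V) : G.Meas :=
  if G.WonByEven π then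
    ((toLex (fun j : Fin G.d =>
      if Even (j : ℕ) then 0
      else sSup {c | ∃ l, G.domStretchPrefix π (j : ℕ) l ∧ c = G.degree π (j : ℕ) l}) :
        Lex (Fin G.d → ℕ)) : G.Meas)
  else ⊤

/-- `U` is an `i`-dominion inside the subgame induced on `W`. -/
def IsDominionIn (W : Set V) (i : Bool) (U : Set V) : Prop :=
  ∃ σ : List V → V → V,
    (∀ h u, u ∈ W → G.ownerEven u = i → G.E u (σ h u) ∧ σ h u ∈ W) ∧
    ∀ π, G.IsPlay π → (∀ n, π n ∈ W) → π 0 ∈ U → G.ConsH i σ π →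
      (∀ n, π n ∈ U) ∧ G.WonBy i π

/-- `U` is an `i`-dominion in `G`. -/
def IsDominion (i : Bool) (U : Set V) : Prop := G.IsDominionIn Set.univ i U

/-- Winning region of player `i` in the subgame induced on `W`. -/
def WinIn (W : Set V) (i : Bool) : Set V :=
  {v | v ∈ W ∧ ∃ σ : List V → V → V,
    (∀ h u, u ∈ W → G.ownerEven u = i → G.E u (σ h u) ∧ σ h u ∈ W) ∧
    ∀ π, G.IsPlay π → (∀ n, π n ∈ W) → π 0 = v → G.ConsH i σ π → G.WonBy i π}

end ParityGame

namespace ParityGame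

set_option linter.unusedSectionVars false

variable {V : Type*} [Fintype V] [DecidableEq V] (G : ParityGame V)

lemma trunc_top' (k : ℕ) : G.trunc k (⊤ : G.Meas) = ⊤ := rfl

lemma trunc_coe' (k : ℕ) (f : Lex (Fin G.d → ℕ)) :
    G.trunc k (f : G.Meas) =
      ((toLex (fun j : Fin G.d => if (j : ℕ) ≤ k then ofLex f j else 0) : Lex (Fin G.d → ℕ)) : G.Meas) := rfl

lemma trunc_eq_top_iff {k : ℕ} {m : G.Meas} : G.trunc k m = ⊤ ↔ m = ⊤ := by
  induction m using WithTop.recTopCoe with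
  | top => simp [trunc_top']
  | coe f => simp [trunc_coe']

lemma truncCore_mono (k : ℕ) {f g : Lex (Fin G.d → ℕ)} (h : f ≤ g) :
    (toLex (fun j : Fin G.d => if (j : ℕ) ≤ k then ofLex f j else 0) : Lex (Fin G.d → ℕ)) ≤
    (toLex (fun j : Fin G.d => if (j : ℕ) ≤ k then ofLex g j else 0) : Lex (Fin G.d → ℕ)) := by
  rcases eq_or_lt_of_le h with rfl | hlt
  · exact le_refl _
  · obtain ⟨i, hji, hi⟩ := hlt
    by_cases hik : (i : ℕ) ≤ k
    · refine le_of_lt ⟨i, fun j hj => ?_, ?_⟩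
      · have hjk : (j : ℕ) ≤ k := le_trans (le_of_lt hj) hik
        show (if (j : ℕ) ≤ k then ofLex f j else 0) = (if (j : ℕ) ≤ k then ofLex g j else 0)
        rw [if_pos hjk, if_pos hjk]
        exact hji j hj
      · show (if (i : ℕ) ≤ k then ofLex f i else 0) < (if (i : ℕ) ≤ k then ofLex g i else 0)
        rw [if_pos hik, if_pos hik]
        exact hi
    · refine le_of_eq ?_
      apply congrArg toLex
      funext j
      by_cases hjk : (j : ℕ) ≤ k
      · have : (j : ℕ) < (i : ℕ) := lt_of_le_of_lt hjk (lt_of_not_ge hik)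
        rw [if_pos hjk, if_pos hjk]
        exact hji j this
      · simp [hjk]

lemma trunc_mono (k : ℕ) : Monotone (G.trunc k) := by
  intro a b h
  induction b using WithTop.recTopCoe with
  | top => exact le_top
  | coe g =>
    induction a using WithTop.recTopCoe with
    | top => exact absurd h (by simp)
    | coe f =>
      rw [trunc_coe', trunc_coe']
      exact WithTop.coe_le_coe.2 (G.truncCore_mono k (WithTop.coe_le_coe.1 h))

lemma trunc_trunc {i p : ℕ} (hip : i ≤ p) (m : G.Meas) :
    G.trunc i (G.trunc p m) = G.trunc i m := by
  induction m using WithTop.recTopCoe with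
  | top => rfl
  | coe f =>
    rw [trunc_coe', trunc_coe', trunc_coe']
    apply congrArg
    apply congrArg toLex
    funext j
    by_cases hj : (j : ℕ) ≤ i
    · have : (j : ℕ) ≤ p := le_trans hj hip
      simp [hj, this]
    · simp [hj]

lemma prog_key (ρ : V → G.Meas) (v w : V)
    (hge : G.geAt (G.prio v) (ρ v) (G.Prog ρ v w)) (hv : ρ v ≠ ⊤) :
    ρ w ≠ ⊤ ∧ G.geAt (G.prio v) (ρ v) (ρ w) ∧
      (¬ Even (G.prio v) → G.gtAt (G.prio v) (ρ v) (ρ w)) := by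
  have hvt : G.trunc (G.prio v) (ρ v) ≠ ⊤ := fun h => hv (G.trunc_eq_top_iff.1 h)
  have hge' : G.trunc (G.prio v) (G.Prog ρ v w) ≤ G.trunc (G.prio v) (ρ v) := hge
  have hPt : G.Prog ρ v w ≠ ⊤ := by
    intro h
    apply hvt
    rw [h, trunc_top'] at hge'
    exact top_le_iff.1 hge'
  by_cases h : ∃ m, IsLeast {m | G.inMEven m ∧ G.progCond ρ v w m} m
  · have hProg : G.Prog ρ v w = h.choose := by rw [Prog, dif_pos h]
    have hcond : G.progCond ρ v w (G.Prog ρ v w) := by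
      rw [hProg]; exact h.choose_spec.1.2
    by_cases hp : Even (G.prio v)
    · rw [progCond, if_pos hp] at hcond
      have h1 : G.trunc (G.prio v) (ρ w) ≤ G.trunc (G.prio v) (ρ v) := le_trans hcond hge'
      refine ⟨?_, h1, fun ho => absurd hp ho⟩
      intro hwt
      apply hvt
      rw [hwt, trunc_top'] at h1
      exact top_le_iff.1 h1
    · rw [progCond, if_neg hp] at hcond
      rcases hcond with hlt | ⟨hm, _⟩
      · have h1 : G.trunc (G.prio v) (ρ w) < G.trunc (G.prio v) (ρ v) := lt_of_lt_of_le hlt hge'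
        refine ⟨?_, le_of_lt h1, fun _ => h1⟩
        intro hwt
        rw [hwt, trunc_top'] at h1
        exact not_top_lt h1
      · exact absurd hm hPt
  · exact absurd (by rw [Prog, dif_neg h]) hPt

end ParityGame


open ParityGame

/-- the positional strategy for Even that moves to a successor of
minimal least-progress-measure value is winning for Even from every vertex with
non-`⊤` least measure. -/
theorem min_successor_strategy_winning_for_even
    {V : Type*} [Fintype V] [DecidableEq V] (G : ParityGame V)
    (ρbar : V → G.Meas) (hgpm : G.IsGPM ρbar)
    (hleast : ∀ ρ : V → G.Meas, G.IsGPM ρ → ∀ v, ρbar v ≤ ρ v)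
    (σ : V → V)
    (hσ : ∀ v, G.ownerEven v = true → ρbar v ≠ ⊤ →
      G.E v (σ v) ∧ ∀ w', G.E v w' → ρbar (σ v) ≤ ρbar w') :
    ∀ v : V, ρbar v ≠ ⊤ →
      ∀ π : ℕ → V, G.IsPlay π → π 0 = v →
        (∀ n, G.ownerEven (π n) = true → ρbar (π n) ≠ ⊤ → π (n + 1) = σ (π n)) →
        G.WonByEven π := by
  intro v hv π hplay h0 hcons
  have step : ∀ n, ρbar (π n) ≠ ⊤ →
      ρbar (π (n + 1)) ≠ ⊤ ∧ G.geAt (G.prio (π n)) (ρbar (π n)) (ρbar (π (n + 1))) ∧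
        (¬ Even (G.prio (π n)) → G.gtAt (G.prio (π n)) (ρbar (π n)) (ρbar (π (n + 1)))) := by
    intro n hn
    cases hov : G.ownerEven (π n) with
    | false =>
      exact G.prog_key ρbar (π n) (π (n + 1))
        ((hgpm.2 (π n)).2 hov (π (n + 1)) (hplay n)) hn
    | true =>
      obtain ⟨w, hw, hge⟩ := (hgpm.2 (π n)).1 hov
      obtain ⟨hwt, hge', hgt'⟩ := G.prog_key ρbar (π n) w hge hn
      have heq := hcons n hov hn
      have hle : ρbar (π (n + 1)) ≤ ρbar w := by
        rw [heq]; exact (hσ (π n) hov hn).2 w hw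
      refine ⟨?_, ?_, ?_⟩
      · intro h; rw [h] at hle; exact hwt (top_le_iff.1 hle)
      · exact le_trans (G.trunc_mono _ hle) hge'
      · intro ho; exact lt_of_le_of_lt (G.trunc_mono _ hle) (hgt' ho)
  have hnt : ∀ n, ρbar (π n) ≠ ⊤ := by
    intro n
    induction n with
    | zero => rw [h0]; exact hv
    | succ k ih => exact (step k ih).1
  have hne : {p | G.InfOft π p}.Nonempty := by
    obtain ⟨u, hu⟩ := Finite.exists_infinite_fiber π
    refine ⟨G.prio u, fun N => ?_⟩
    have hinf : (π ⁻¹' {u}).Infinite := Set.infinite_coe_iff.1 hu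
    obtain ⟨n, hn, hNn⟩ := hinf.exists_gt N
    rw [Set.mem_preimage, Set.mem_singleton_iff] at hn
    exact ⟨n, le_of_lt hNn, by rw [hn]⟩
  rw [WonByEven]
  by_contra hodd
  set i := sInf {p | G.InfOft π p} with hi
  have hiinf : G.InfOft π i := Nat.sInf_mem hne
  have hbd : ∀ p, p < i → ∃ N, ∀ n, N ≤ n → G.prio (π n) ≠ p := by
    intro p hp
    have hni : ¬ G.InfOft π p := fun h => absurd (Nat.sInf_le h) (not_le.2 hp)
    rw [InfOft] at hni
    push_neg at hni
    exact hni
  choose! Np hNp using hbd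
  set N0 := (Finset.range i).sup Np with hN0
  have hbelow : ∀ n, N0 ≤ n → i ≤ G.prio (π n) := by
    intro n hn
    by_contra hlt
    push_neg at hlt
    exact hNp _ hlt n (le_trans (Finset.le_sup (Finset.mem_range.2 hlt)) hn) rfl
  set a : ℕ → G.Meas := fun n => G.trunc i (ρbar (π n)) with ha
  have hdec : ∀ n, N0 ≤ n → a (n + 1) ≤ a n := by
    intro n hn
    have h1 := (step n (hnt n)).2.1
    have h2 : i ≤ G.prio (π n) := hbelow n hn
    calc a (n + 1) = G.trunc i (G.trunc (G.prio (π n)) (ρbar (π (n + 1)))) :=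
          (G.trunc_trunc h2 _).symm
      _ ≤ G.trunc i (G.trunc (G.prio (π n)) (ρbar (π n))) := G.trunc_mono i h1
      _ = a n := G.trunc_trunc h2 _
  have hanti : ∀ m n, N0 ≤ m → m ≤ n → a n ≤ a m := by
    intro m n hm hmn
    induction n, hmn using Nat.le_induction with
    | base => exact le_refl _
    | succ k hk ih => exact le_trans (hdec k (le_trans hm hk)) ih
  have hstrict : ∀ t, N0 ≤ t → G.prio (π t) = i → a (t + 1) < a t := by
    intro t ht hpt
    have hgt := (step t (hnt t)).2.2 (by rw [hpt]; exact hodd)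
    rw [hpt] at hgt
    exact hgt
  obtain ⟨m0, hm0, hmin⟩ := (wellFounded_lt (α := G.Meas)).has_min
    {m | ∃ n, N0 ≤ n ∧ G.prio (π n) = i ∧ m = a n}
    (by obtain ⟨t, ht, hpt⟩ := hiinf N0; exact ⟨a t, t, ht, hpt, rfl⟩)
  obtain ⟨t, ht, hpt, rfl⟩ := hm0
  obtain ⟨t', ht', hpt'⟩ := hiinf (t + 1)
  have h1 : a t' ≤ a (t + 1) := hanti (t + 1) t' (le_trans ht (Nat.le_succ t)) ht'
  have h2 : a t' < a t := lt_of_le_of_lt h1 (hstrict t ht hpt)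
  exact hmin (a t') ⟨t', le_trans (le_trans ht (Nat.le_succ t)) ht', hpt', rfl⟩ h2


end
end

section
/- Let G be a parity game. If D ⊆ V is an Odd-dominion in G, then Attr_Odd(D) is also an Odd-dominion in G. -/
open Classical

noncomputable section

open ParityGame

namespace AttrAux

variable {V : Type*} [Fintype V] [DecidableEq V]

/-- One step of attractor iteration for player Odd. -/
def AStep (G : ParityGame V) (B : Set V) : Set V :=
  B ∪ {v | G.ownerEven v = false ∧ ∃ w, G.E v w ∧ w ∈ B}
    ∪ {v | G.ownerEven v = true ∧ ∀ w, G.E v w → w ∈ B}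

def AIter (G : ParityGame V) (D : Set V) : ℕ → Set V
  | 0 => D
  | n + 1 => AStep G (AIter G D n)

lemma AIter_mono (G : ParityGame V) (D : Set V) : Monotone (AIter G D) :=
  monotone_nat_of_le_succ (fun _ _ hv => Or.inl (Or.inl hv))

/-- The family of sets whose intersection is `Attr false D`. -/
def Fam (G : ParityGame V) (D : Set V) : Set (Set V) :=
  {A | D ⊆ A ∧
    (∀ v, G.ownerEven v = false → (∃ w, G.E v w ∧ w ∈ A) → v ∈ A) ∧
    (∀ v, G.ownerEven v ≠ false → (∀ w, G.E v w → w ∈ A) → v ∈ A)}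

lemma attr_eq (G : ParityGame V) (D : Set V) : G.Attr false D = ⋂₀ Fam G D := rfl

lemma AIter_subset_mem (G : ParityGame V) (D : Set V) {B : Set V}
    (hB : B ∈ Fam G D) : ∀ n, AIter G D n ⊆ B := by
  intro n; induction n with
  | zero => exact hB.1
  | succ n ih =>
    rintro v ((hv | ⟨ho, w, hw, hwB⟩) | ⟨ho, hall⟩)
    · exact ih hv
    · exact hB.2.1 v ho ⟨w, hw, ih hwB⟩
    · exact hB.2.2 v (by simp [ho]) (fun w hw => ih (hall w hw))

lemma AIter_subset_attr (G : ParityGame V) (D : Set V) (n : ℕ) :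
    AIter G D n ⊆ G.Attr false D := by
  intro v hv
  rw [attr_eq]
  exact fun B hB => AIter_subset_mem G D hB n hv

/-- Rank of a vertex in the attractor iteration. -/
noncomputable def rk (G : ParityGame V) (D : Set V) (v : V) : ℕ :=
  if h : ∃ n, v ∈ AIter G D n then @Nat.find _ (Classical.decPred _) h else 0

lemma rk_spec (G : ParityGame V) (D : Set V) {v : V} (h : ∃ n, v ∈ AIter G D n) :
    v ∈ AIter G D (rk G D v) ∧ ∀ m, m < rk G D v → v ∉ AIter G D m := by
  unfold rk
  rw [dif_pos h]
  exact ⟨Nat.find_spec h, fun m hm => Nat.find_min h hm⟩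

lemma rk_le (G : ParityGame V) (D : Set V) {v : V} {n : ℕ} (h : v ∈ AIter G D n) :
    rk G D v ≤ n := by
  unfold rk
  rw [dif_pos ⟨n, h⟩]
  exact Nat.find_le h

lemma attr_subset_iUnion (G : ParityGame V) (D : Set V) :
    G.Attr false D ⊆ ⋃ n, AIter G D n := by
  rw [attr_eq]
  apply Set.sInter_subset_of_mem
  refine ⟨fun v hv => Set.mem_iUnion.2 ⟨0, hv⟩, ?_, ?_⟩
  · rintro v ho ⟨w, hw, hwU⟩
    obtain ⟨n, hn⟩ := Set.mem_iUnion.1 hwU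
    exact Set.mem_iUnion.2 ⟨n + 1, Or.inl (Or.inr ⟨ho, w, hw, hn⟩)⟩
  · intro v ho hall
    have ho' : G.ownerEven v = true := by
      cases h : G.ownerEven v
      · exact absurd h ho
      · rfl
    refine Set.mem_iUnion.2 ⟨Finset.univ.sup (rk G D) + 1, Or.inr ⟨ho', ?_⟩⟩
    intro w hw
    obtain ⟨n, hn⟩ := Set.mem_iUnion.1 (hall w hw)
    have h1 : w ∈ AIter G D (rk G D w) := (rk_spec G D ⟨n, hn⟩).1
    exact AIter_mono G D (Finset.le_sup (Finset.mem_univ w)) h1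

/-- A default attractor move for Odd. -/
noncomputable def attrMove (G : ParityGame V) (D : Set V) (v : V) : V :=
  if h : ∃ w, G.E v w ∧ w ∈ AIter G D (rk G D v - 1) then h.choose
  else (G.total v).choose

lemma attrMove_edge (G : ParityGame V) (D : Set V) (v : V) : G.E v (attrMove G D v) := by
  unfold attrMove
  split
  · next h => exact h.choose_spec.1
  · exact (G.total v).choose_spec

/-- The combined strategy: follow `σD` from the first moment the play visited `D`,
and follow the attractor moves before that. -/
noncomputable def comb (G : ParityGame V) (D : Set V) (σD : List V → V → V)
    (h : List V) (v : V) : V :=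
  if hk : ∃ k, k < (h ++ [v]).length ∧ (h ++ [v]).getD k v ∈ D then
    σD (h.drop (@Nat.find _ (Classical.decPred _) hk)) v
  else attrMove G D v

lemma hist_succ (π : ℕ → V) (n : ℕ) :
    (hist π n : List V) ++ [π n] = hist π (n + 1) := by
  unfold ParityGame.hist
  rw [List.ofFn_succ']
  simp [List.concat_eq_append]

lemma hist_length (π : ℕ → V) (n : ℕ) : (hist π n : List V).length = n := by
  simp [ParityGame.hist]

lemma hist_getD (π : ℕ → V) (n k : ℕ) (hk : k < n) (d : V) :
    (hist π n : List V).getD k d = π k := by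
  rw [List.getD_eq_getElem _ _ (by simpa [hist_length] using hk)]
  simp [ParityGame.hist]

lemma infOft_shift (G : ParityGame V) (π : ℕ → V) (N : ℕ) (p : ℕ) :
    G.InfOft π p ↔ G.InfOft (fun m => π (N + m)) p := by
  constructor
  · intro h M
    obtain ⟨n, hn, hp⟩ := h (N + M)
    refine ⟨n - N, by omega, ?_⟩
    simpa [show N + (n - N) = n by omega] using hp
  · intro h M
    obtain ⟨m, hm, hp⟩ := h M
    exact ⟨N + m, by omega, hp⟩

lemma wonByEven_shift (G : ParityGame V) (π : ℕ → V) (N : ℕ) :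
    G.WonByEven π ↔ G.WonByEven (fun m => π (N + m)) := by
  unfold ParityGame.WonByEven
  have : {p | G.InfOft π p} = {p | G.InfOft (fun m => π (N + m)) p} := by
    ext p; exact infOft_shift G π N p
  rw [this]

end AttrAux

open AttrAux

/-- the Odd-attractor of an Odd-dominion is an Odd-dominion. -/
theorem attractor_of_dominion_is_dominion
    {V : Type*} [Fintype V] [DecidableEq V] (G : ParityGame V) (D : Set V)
    (hD : G.IsDominion false D) :
    G.IsDominion false (G.Attr false D) := by
  classical
  obtain ⟨σD, hσDvalid, hσDwin⟩ := hD
  refine ⟨comb G D σD, ?_, ?_⟩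
  · -- validity of the combined strategy
    intro h u _ hu
    refine ⟨?_, trivial⟩
    unfold comb
    split
    · exact (hσDvalid _ u trivial hu).1
    · exact attrMove_edge G D u
  · intro π hplay _ h0 hcons
    -- before visiting D, the rank strictly decreases
    have hpre : ∀ n, (∀ k, k ≤ n → π k ∉ D) → π n ∈ ⋃ m, AIter G D m →
        π (n + 1) ∈ AIter G D (rk G D (π n) - 1) := by
      intro n hnD hmem
      have hex : ∃ m, π n ∈ AIter G D m := Set.mem_iUnion.1 hmem
      have hrk := rk_spec G D hex
      have hr1 : 1 ≤ rk G D (π n) := by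
        rcases Nat.eq_zero_or_pos (rk G D (π n)) with h0' | h'
        · exfalso
          apply hnD n le_rfl
          have := hrk.1
          rwa [h0'] at this
        · exact h'
      have hnot : π n ∉ AIter G D (rk G D (π n) - 1) := hrk.2 _ (by omega)
      have hmemstep : π n ∈ AStep G (AIter G D (rk G D (π n) - 1)) := by
        have h1 : π n ∈ AIter G D ((rk G D (π n) - 1) + 1) := by
          rw [Nat.sub_add_cancel hr1]; exact hrk.1
        exact h1
      rcases hmemstep with (hmem' | ⟨ho, w, hw, hwm⟩) | ⟨ho, hall⟩
      · exact absurd hmem' hnot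
      · have hcn := hcons n ho
        rw [hcn]
        have hnc : ¬ ∃ k, k < ((hist π n : List V) ++ [π n]).length ∧
            ((hist π n : List V) ++ [π n]).getD k (π n) ∈ D := by
          rw [hist_succ]
          rintro ⟨k, hk, hkD⟩
          rw [hist_length] at hk
          rw [hist_getD π (n + 1) k hk] at hkD
          exact hnD k (by omega) hkD
        unfold comb
        rw [dif_neg hnc]
        unfold attrMove
        have hex2 : ∃ w, G.E (π n) w ∧ w ∈ AIter G D (rk G D (π n) - 1) :=
          ⟨w, hw, hwm⟩
        rw [dif_pos hex2]
        exact hex2.choose_spec.2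
      · exact hall _ (hplay n)
    -- the play stays in the union of the iterates as long as it avoids D
    have hchain : ∀ n, (∀ k, k < n → π k ∉ D) → π n ∈ ⋃ m, AIter G D m := by
      intro n
      induction n with
      | zero => exact fun _ => attr_subset_iUnion G D h0
      | succ n ih =>
        intro hnD
        have hmem := ih (fun k hk => hnD k (by omega))
        have := hpre n (fun k hk => hnD k (by omega)) hmem
        exact Set.mem_iUnion.2 ⟨_, this⟩
    have hdec : ∀ n, (∀ k, k ≤ n → π k ∉ D) → rk G D (π (n + 1)) < rk G D (π n) := by
      intro n hnD
      have hmem := hchain n (fun k hk => hnD k (by omega))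
      have h1 := hpre n hnD hmem
      have h2 := rk_le G D h1
      have hex : ∃ m, π n ∈ AIter G D m := Set.mem_iUnion.1 hmem
      have hrk := rk_spec G D hex
      have hr1 : 1 ≤ rk G D (π n) := by
        rcases Nat.eq_zero_or_pos (rk G D (π n)) with h0' | h'
        · exfalso
          apply hnD n le_rfl
          have := hrk.1
          rwa [h0'] at this
        · exact h'
      omega
    -- the play reaches D
    have hexN : ∃ n, π n ∈ D := by
      by_contra hno
      push_neg at hno
      have hb : ∀ n, rk G D (π n) + n ≤ rk G D (π 0) := by
        intro n
        induction n with
        | zero => omega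
        | succ n ih =>
          have := hdec n (fun k _ => hno k)
          omega
      have := hb (rk G D (π 0) + 1)
      omega
    set N := Nat.find hexN with hNdef
    have hN : π N ∈ D := Nat.find_spec hexN
    have hNmin : ∀ k, k < N → π k ∉ D := fun k hk => Nat.find_min hexN hk
    set π' : ℕ → V := fun m => π (N + m) with hπ'
    have hplay' : G.IsPlay π' := fun m => hplay (N + m)
    have hcons' : G.ConsH false σD π' := by
      intro m ho
      have hcn := hcons (N + m) ho
      have hk : ∃ k, k < ((hist π (N + m) : List V) ++ [π (N + m)]).length ∧
          ((hist π (N + m) : List V) ++ [π (N + m)]).getD k (π (N + m)) ∈ D := by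
        refine ⟨N, ?_, ?_⟩
        · rw [hist_succ, hist_length]; omega
        · rw [hist_succ, hist_getD π (N + m + 1) N (by omega)]; exact hN
      have hfind : @Nat.find _ (Classical.decPred _) hk = N := by
        rw [@Nat.find_eq_iff _ _ (Classical.decPred _) hk]
        constructor
        · refine ⟨?_, ?_⟩
          · rw [hist_succ, hist_length]; omega
          · rw [hist_succ, hist_getD π (N + m + 1) N (by omega)]; exact hN
        · rintro k hkN ⟨hk1, hk2⟩
          rw [hist_succ, hist_length] at hk1
          rw [hist_succ, hist_getD π (N + m + 1) k (by omega)] at hk2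
          exact hNmin k hkN hk2
      have hdrop : (hist π (N + m) : List V).drop N = (hist π' m : List V) := by
        apply List.ext_getElem
        · simp [hist_length]
        · intro i h1 h2
          rw [List.getElem_drop]
          simp only [ParityGame.hist, List.getElem_ofFn]
          rfl
      show π (N + m + 1) = σD (hist π' m) (π' m)
      rw [hcn]
      unfold comb
      rw [dif_pos hk, hfind, hdrop]
    have hN0 : π' 0 ∈ D := hN
    obtain ⟨hDall, hwon'⟩ := hσDwin π' hplay' (fun _ => trivial) hN0 hcons'
    constructor
    · intro n
      rcases le_or_gt N n with hle | hlt
      · have : π n = π' (n - N) := by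
          simp only [hπ']
          congr 1
          omega
        rw [this]
        exact AIter_subset_attr G D 0 (hDall (n - N))
      · have hmem := hchain n (fun k hk => hNmin k (by omega))
        obtain ⟨m, hm⟩ := Set.mem_iUnion.1 hmem
        exact AIter_subset_attr G D m hm
    · have hwe : ¬ G.WonByEven π' := by
        simpa [ParityGame.WonBy] using hwon'
      simp only [ParityGame.WonBy, if_false, Bool.false_eq_true, if_neg]
      rw [wonByEven_shift G π N]
      exact hwe

end
end

section
/- Let G be a parity game, let D ⊆ V be an Odd-dominion in G, and let A = Attr_Odd(D). Then the winning regions satisfy W_Odd(G) = A ∪ W_Odd(G ∖ A) and W_Even(G) = W_Even(G ∖ A), where G ∖ A is the subgame induced on V ∖ A (which is a parity game since its edge relation is total). -/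
open Classical

noncomputable section

open ParityGame
namespace PGAux

open ParityGame

variable {V : Type*} [Fintype V] [DecidableEq V]

set_option linter.unusedSectionVars false

/-! ### History lemmas -/

lemma hist_length (π : ℕ → V) (n : ℕ) : (hist π n).length = n := by
  simp [hist]

lemma hist_zero (π : ℕ → V) : hist π 0 = [] := by simp [hist]

lemma hist_succ (π : ℕ → V) (n : ℕ) : hist π (n + 1) = hist π n ++ [π n] := by
  unfold hist
  rw [List.ofFn_succ']
  simp [List.concat_eq_append]

lemma hist_getElem (π : ℕ → V) {n k : ℕ} (hk : k < n) :
    (hist π n)[k]'(by simpa [hist_length] using hk) = π k := by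
  simp [hist]

lemma hist_congr {π π' : ℕ → V} {n : ℕ} (h : ∀ k < n, π k = π' k) :
    hist π n = hist π' n := by
  apply List.ext_getElem (by simp [hist_length])
  intro k h1 h2
  rw [hist_getElem π (by simpa [hist_length] using h1),
    hist_getElem π' (by simpa [hist_length] using h2)]
  exact h k (by simpa [hist_length] using h1)

lemma hist_drop (π : ℕ → V) {m n : ℕ} (h : m ≤ n) :
    (hist π n).drop m = hist (fun k => π (m + k)) (n - m) := by
  apply List.ext_getElem (by simp [hist_length])
  intro k h1 h2
  rw [List.getElem_drop, hist_getElem (fun k => π (m + k)) (by simpa [hist_length] using h2)]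
  have hk : m + k < n := by
    have := h2; simp [hist_length] at this; omega
  rw [hist_getElem π hk]

lemma hist_concat_getD (π : ℕ → V) {n k : ℕ} (hk : k ≤ n) (d : V) :
    (hist π n ++ [π n]).getD k d = π k := by
  rw [← hist_succ]
  rw [List.getD_eq_getElem _ _ (by simp [hist_length]; omega)]
  exact hist_getElem π (by omega)

/-! ### Building plays step by step -/

def stepSeq (f : List V → V → V) (v : V) : ℕ → List V × V
  | 0 => ([], v)
  | n + 1 => ((stepSeq f v n).1 ++ [(stepSeq f v n).2],
      f (stepSeq f v n).1 (stepSeq f v n).2)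

def buildPlay (f : List V → V → V) (v : V) (n : ℕ) : V := (stepSeq f v n).2

lemma buildPlay_zero (f : List V → V → V) (v : V) : buildPlay f v 0 = v := rfl

lemma stepSeq_fst (f : List V → V → V) (v : V) (n : ℕ) :
    (stepSeq f v n).1 = hist (buildPlay f v) n := by
  induction n with
  | zero => simp [stepSeq, hist_zero]
  | succ n ih => rw [hist_succ]; simp [stepSeq, ih]; rfl

lemma buildPlay_succ (f : List V → V → V) (v : V) (n : ℕ) :
    buildPlay f v (n + 1) = f (hist (buildPlay f v) n) (buildPlay f v n) := by
  rw [← stepSeq_fst]; rfl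

/-! ### Strategy switching -/

/-- Play `τ` (with history restarted at the first moment the play entered `T`)
if the play has visited `T`, and otherwise play `σ`. -/
def switch (T : Set V) (τ σ : List V → V → V) (h : List V) (u : V) : V :=
  if hx : ∃ k, k < (h ++ [u]).length ∧ (h ++ [u]).getD k u ∈ T then
    τ (h.drop (Nat.find hx)) u
  else σ h u

lemma switch_pos (T : Set V) (τ σ : List V → V → V) (π : ℕ → V) {n n₀ : ℕ}
    (h₀ : n₀ ≤ n) (hmem : π n₀ ∈ T) (hmin : ∀ k < n₀, π k ∉ T) :
    switch T τ σ (hist π n) (π n) = τ (hist (fun m => π (n₀ + m)) (n - n₀)) (π n) := by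
  unfold switch
  have hlen : (hist π n ++ [π n]).length = n + 1 := by simp [hist_length]
  have hgetD : ∀ k ≤ n, (hist π n ++ [π n]).getD k (π n) = π k := fun k hk =>
    hist_concat_getD π hk _
  have hx : ∃ k, k < (hist π n ++ [π n]).length ∧ (hist π n ++ [π n]).getD k (π n) ∈ T :=
    ⟨n₀, by rw [hlen, hgetD n₀ h₀]; exact ⟨by omega, hmem⟩⟩
  rw [dif_pos hx]
  have hfind : Nat.find hx = n₀ := by
    rw [Nat.find_eq_iff]
    refine ⟨⟨by omega, by rw [hgetD n₀ h₀]; exact hmem⟩, ?_⟩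
    intro k hk
    rintro ⟨hk1, hk2⟩
    rw [hgetD k (by omega)] at hk2
    exact hmin k hk hk2
  rw [hfind, hist_drop π h₀]

lemma switch_neg (T : Set V) (τ σ : List V → V → V) (π : ℕ → V) {n : ℕ}
    (h : ∀ k ≤ n, π k ∉ T) :
    switch T τ σ (hist π n) (π n) = σ (hist π n) (π n) := by
  unfold switch
  rw [dif_neg]
  rintro ⟨k, hk1, hk2⟩
  have hlen : (hist π n ++ [π n]).length = n + 1 := by simp [hist_length]
  rw [hlen] at hk1
  rw [hist_concat_getD π (by omega)] at hk2
  exact h k (by omega) hk2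

lemma getD_concat_self (h : List V) (u : V) : (h ++ [u]).getD h.length u = u := by
  rw [List.getD_eq_getElem _ _ (by simp)]
  simp

lemma switch_last_not_mem {T : Set V} {τ σ : List V → V → V} {h : List V} {u : V}
    (hu : u ∉ T) (hmem : ∀ w ∈ h, w ∉ T) :
    switch T τ σ h u = σ h u := by
  unfold switch
  rw [dif_neg]
  rintro ⟨k, hk1, hk2⟩
  simp only [List.length_append, List.length_singleton] at hk1
  rcases Nat.lt_or_ge k h.length with hk | hk
  · rw [List.getD_eq_getElem _ _ (by simp; omega), List.getElem_append_left hk] at hk2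
    exact hmem _ (List.getElem_mem _) hk2
  · have : k = h.length := by omega
    subst this
    rw [getD_concat_self] at hk2
    exact hu hk2

end PGAux
namespace PGAux

open ParityGame

variable {V : Type*} [Fintype V] [DecidableEq V] (G : ParityGame V)

set_option linter.unusedSectionVars false

/-! ### Tails of plays -/

lemma infOft_shift (π : ℕ → V) (s p : ℕ) :
    G.InfOft (fun m => π (s + m)) p ↔ G.InfOft π p := by
  constructor
  · intro h N
    obtain ⟨m, hm, hp⟩ := h N
    exact ⟨s + m, by omega, hp⟩
  · intro h N
    obtain ⟨m, hm, hp⟩ := h (s + N)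
    refine ⟨m - s, by omega, ?_⟩
    show G.prio (π (s + (m - s))) = p
    rw [show s + (m - s) = m by omega]
    exact hp

lemma wonByEven_shift (π : ℕ → V) (s : ℕ) :
    G.WonByEven (fun m => π (s + m)) ↔ G.WonByEven π := by
  unfold WonByEven
  have : {p | G.InfOft (fun m => π (s + m)) p} = {p | G.InfOft π p} := by
    ext p; exact infOft_shift G π s p
  rw [this]

lemma wonBy_shift (i : Bool) (π : ℕ → V) (s : ℕ) :
    G.WonBy i (fun m => π (s + m)) ↔ G.WonBy i π := by
  cases i <;> simp [WonBy, wonByEven_shift]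

lemma isPlay_shift {π : ℕ → V} (hπ : G.IsPlay π) (s : ℕ) :
    G.IsPlay (fun m => π (s + m)) := by
  intro m
  have := hπ (s + m)
  simpa [Nat.add_assoc] using this

/-! ### The attractor as an iteration -/

variable (D : Set V)

def attrIter : ℕ → Set V
  | 0 => D
  | n + 1 => attrIter n ∪
      {v | (G.ownerEven v = false ∧ ∃ w, G.E v w ∧ w ∈ attrIter n) ∨
           (G.ownerEven v = true ∧ ∀ w, G.E v w → w ∈ attrIter n)}

lemma attrIter_mono : Monotone (attrIter G D) := by
  apply monotone_nat_of_le_succ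
  intro n
  exact Set.subset_union_left

lemma attrIter_subset (B : Set V)
    (hB : D ⊆ B ∧ (∀ v, G.ownerEven v = false → (∃ w, G.E v w ∧ w ∈ B) → v ∈ B) ∧
      (∀ v, G.ownerEven v ≠ false → (∀ w, G.E v w → w ∈ B) → v ∈ B)) (n : ℕ) :
    attrIter G D n ⊆ B := by
  induction n with
  | zero => exact hB.1
  | succ n ih =>
    rintro v (hv | hv)
    · exact ih hv
    · rcases hv with ⟨ho, w, hw, hwB⟩ | ⟨ho, hall⟩
      · exact hB.2.1 v ho ⟨w, hw, ih hwB⟩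
      · exact hB.2.2 v (by simp [ho]) (fun w hw => ih (hall w hw))

lemma attr_eq_iUnion : G.Attr false D = ⋃ n, attrIter G D n := by
  apply Set.Subset.antisymm
  · apply Set.sInter_subset_of_mem
    refine ⟨fun v hv => Set.mem_iUnion.2 ⟨0, hv⟩, ?_, ?_⟩
    · rintro v ho ⟨w, hw, hwA⟩
      obtain ⟨n, hn⟩ := Set.mem_iUnion.1 hwA
      exact Set.mem_iUnion.2 ⟨n + 1, Or.inr (Or.inl ⟨ho, w, hw, hn⟩)⟩
    · intro v ho hall
      have ho' : G.ownerEven v = true := by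
        cases h : G.ownerEven v
        · exact absurd h ho
        · rfl
      choose g hg using fun w => (Classical.em (G.E v w)).elim
        (fun he => (Set.mem_iUnion.1 (hall w he)).imp (fun n hn => fun _ => hn))
        (fun he => ⟨0, fun h => absurd h he⟩)
      set N := Finset.univ.sup g with hN
      refine Set.mem_iUnion.2 ⟨N + 1, Or.inr (Or.inr ⟨ho', fun w hw => ?_⟩)⟩
      exact attrIter_mono G D (Finset.le_sup (Finset.mem_univ w)) (hg w hw)
  · rw [Set.iUnion_subset_iff]
    intro n
    intro v hv
    apply Set.mem_sInter.2
    intro B hB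
    exact attrIter_subset G D B hB n hv

lemma subset_attr : D ⊆ G.Attr false D := by
  rw [attr_eq_iUnion]
  exact Set.subset_iUnion_of_subset 0 (le_refl _)

lemma attr_odd_closed {v w : V} (ho : G.ownerEven v = false) (he : G.E v w)
    (hw : w ∈ G.Attr false D) : v ∈ G.Attr false D := by
  rw [attr_eq_iUnion] at hw ⊢
  obtain ⟨n, hn⟩ := Set.mem_iUnion.1 hw
  exact Set.mem_iUnion.2 ⟨n + 1, Or.inr (Or.inl ⟨ho, w, he, hn⟩)⟩

lemma attr_even_closed {v : V} (ho : G.ownerEven v = true)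
    (hall : ∀ w, G.E v w → w ∈ G.Attr false D) : v ∈ G.Attr false D := by
  apply Set.mem_sInter.2
  intro B hB
  exact hB.2.2 v (by simp [ho]) (fun w hw => Set.mem_sInter.1 (hall w hw) B hB)

lemma not_mem_attr_odd {v w : V} (hv : v ∉ G.Attr false D)
    (ho : G.ownerEven v = false) (he : G.E v w) : w ∉ G.Attr false D :=
  fun hw => hv (attr_odd_closed G D ho he hw)

lemma not_mem_attr_even {v : V} (hv : v ∉ G.Attr false D)
    (ho : G.ownerEven v = true) : ∃ w, G.E v w ∧ w ∉ G.Attr false D := by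
  by_contra h
  push_neg at h
  exact hv (attr_even_closed G D ho h)

/-! ### Rank in the attractor -/

def rnk (v : V) : ℕ := sInf {n | v ∈ attrIter G D n}

lemma mem_attrIter_rnk {v : V} (hv : v ∈ G.Attr false D) :
    v ∈ attrIter G D (rnk G D v) := by
  rw [attr_eq_iUnion] at hv
  obtain ⟨n, hn⟩ := Set.mem_iUnion.1 hv
  exact Nat.sInf_mem (⟨n, hn⟩ : {n | v ∈ attrIter G D n}.Nonempty)

lemma rnk_le {v : V} {n : ℕ} (hv : v ∈ attrIter G D n) : rnk G D v ≤ n :=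
  Nat.sInf_le hv

lemma not_mem_attrIter_of_lt_rnk {v : V} {k : ℕ} (hk : k < rnk G D v) :
    v ∉ attrIter G D k :=
  fun hv => absurd (rnk_le G D hv) (by omega)

lemma rnk_pos {v : V} (hv : v ∈ G.Attr false D) (hvD : v ∉ D) : 0 < rnk G D v := by
  rcases Nat.eq_zero_or_pos (rnk G D v) with h | h
  · exact absurd (by simpa [attrIter, h] using mem_attrIter_rnk G D hv) hvD
  · exact h

lemma attr_step_odd {v : V} (hv : v ∈ G.Attr false D) (hvD : v ∉ D)
    (ho : G.ownerEven v = false) :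
    ∃ w, G.E v w ∧ w ∈ G.Attr false D ∧ rnk G D w < rnk G D v := by
  have hpos := rnk_pos G D hv hvD
  have hmem := mem_attrIter_rnk G D hv
  obtain ⟨r, hr⟩ : ∃ r, rnk G D v = r + 1 := ⟨rnk G D v - 1, by omega⟩
  rw [hr] at hmem
  have hnot : v ∉ attrIter G D r := not_mem_attrIter_of_lt_rnk G D (by omega)
  rcases hmem with h | h
  · exact absurd h hnot
  · rcases h with ⟨_, w, hw, hwr⟩ | ⟨ho', _⟩
    · refine ⟨w, hw, ?_, ?_⟩
      · rw [attr_eq_iUnion]; exact Set.mem_iUnion.2 ⟨r, hwr⟩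
      · have := rnk_le G D hwr; omega
    · rw [ho] at ho'; exact absurd ho' (by simp)

lemma attr_step_even {v w : V} (hv : v ∈ G.Attr false D) (hvD : v ∉ D)
    (ho : G.ownerEven v = true) (he : G.E v w) :
    w ∈ G.Attr false D ∧ rnk G D w < rnk G D v := by
  have hpos := rnk_pos G D hv hvD
  have hmem := mem_attrIter_rnk G D hv
  obtain ⟨r, hr⟩ : ∃ r, rnk G D v = r + 1 := ⟨rnk G D v - 1, by omega⟩
  rw [hr] at hmem
  have hnot : v ∉ attrIter G D r := not_mem_attrIter_of_lt_rnk G D (by omega)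
  rcases hmem with h | h
  · exact absurd h hnot
  · rcases h with ⟨ho', _⟩ | ⟨_, hall⟩
    · rw [ho] at ho'; exact absurd ho' (by simp)
    · have hwr := hall w he
      refine ⟨by rw [attr_eq_iUnion]; exact Set.mem_iUnion.2 ⟨r, hwr⟩, ?_⟩
      have := rnk_le G D hwr; omega

end PGAux
namespace PGAux

open ParityGame

variable {V : Type*} [Fintype V] [DecidableEq V] (G : ParityGame V) (D : Set V)

set_option linter.unusedSectionVars false

/-- Positional attractor move for Odd. -/
def tOdd (v : V) : V :=
  if h : ∃ w, G.E v w ∧ w ∈ G.Attr false D ∧ rnk G D w < rnk G D v then h.choose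
  else (G.total v).choose

lemma tOdd_edge (v : V) : G.E v (tOdd G D v) := by
  unfold tOdd
  split
  · next h => exact h.choose_spec.1
  · exact (G.total v).choose_spec

lemma tOdd_spec {v : V} (hv : v ∈ G.Attr false D) (hvD : v ∉ D)
    (ho : G.ownerEven v = false) :
    tOdd G D v ∈ G.Attr false D ∧ rnk G D (tOdd G D v) < rnk G D v := by
  have h := attr_step_odd G D hv hvD ho
  unfold tOdd
  rw [dif_pos h]
  exact ⟨h.choose_spec.2.1, h.choose_spec.2.2⟩

/-- Odd's winning strategy on the attractor: attract to `D`, then follow the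
dominion strategy (with restarted history). -/
def tauA (σD : List V → V → V) : List V → V → V :=
  switch D σD (fun _ v => tOdd G D v)

lemma tauA_edge (σD : List V → V → V)
    (hσDe : ∀ h u, G.ownerEven u = false → G.E u (σD h u)) (h : List V) (u : V)
    (ho : G.ownerEven u = false) : G.E u (tauA G D σD h u) := by
  unfold tauA switch
  split
  · exact hσDe _ u ho
  · exact tOdd_edge G D u

lemma tauA_win (σD : List V → V → V)
    (hσDw : ∀ π, G.IsPlay π → π 0 ∈ D → G.ConsH false σD π → G.WonBy false π)
    (π : ℕ → V) (hπ : G.IsPlay π) (h0 : π 0 ∈ G.Attr false D)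
    (hc : G.ConsH false (tauA G D σD) π) : G.WonBy false π := by
  -- Step 1: the play reaches D
  have hreach : ∃ m, π m ∈ D := by
    by_contra h
    push_neg at h
    have key : ∀ n, π n ∈ G.Attr false D →
        π (n + 1) ∈ G.Attr false D ∧ rnk G D (π (n + 1)) < rnk G D (π n) := by
      intro n hn
      cases hown : G.ownerEven (π n)
      · have hstep := hc n hown
        rw [show tauA G D σD (hist π n) (π n)
            = tOdd G D (π n) from switch_neg D σD _ π (fun k _ => h k)] at hstep
        rw [hstep]
        exact tOdd_spec G D hn (h n) hown
      · exact attr_step_even G D hn (h n) hown (hπ n)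
    have hA : ∀ n, π n ∈ G.Attr false D := by
      intro n
      induction n with
      | zero => exact h0
      | succ n ih => exact (key n ih).1
    have hdesc : ∀ n, rnk G D (π n) + n ≤ rnk G D (π 0) := by
      intro n
      induction n with
      | zero => omega
      | succ n ih =>
        have := (key n (hA n)).2
        omega
    have := hdesc (rnk G D (π 0) + 1)
    omega
  -- Step 2: from the first hitting time, the play follows σD
  classical
  let n₀ := Nat.find hreach
  have hmem : π n₀ ∈ D := Nat.find_spec hreach
  have hmin : ∀ k < n₀, π k ∉ D := fun k hk => Nat.find_min hreach hk
  set ρ : ℕ → V := fun m => π (n₀ + m) with hρ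
  have hρc : G.ConsH false σD ρ := by
    intro m hown
    have hstep := hc (n₀ + m) hown
    unfold tauA at hstep
    rw [switch_pos D σD (fun _ v => tOdd G D v) π (n := n₀ + m) (n₀ := n₀)
      (by omega) hmem hmin] at hstep
    show π (n₀ + m + 1) = _
    rw [hstep]
    congr 1
    · rw [show n₀ + m - n₀ = m by omega]
  have := hσDw ρ (isPlay_shift G hπ n₀) (by simpa [hρ] using hmem) hρc
  rw [hρ, wonBy_shift] at this
  exact this

end PGAux
namespace PGAux

open ParityGame

variable {V : Type*} [Fintype V] [DecidableEq V] (G : ParityGame V) (D : Set V)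

set_option linter.unusedSectionVars false
set_option maxHeartbeats 1000000

/-- The attractor is won by Odd. -/
lemma attr_subset_winIn (σD : List V → V → V)
    (hσDe : ∀ h u, G.ownerEven u = false → G.E u (σD h u))
    (hσDw : ∀ π, G.IsPlay π → π 0 ∈ D → G.ConsH false σD π → G.WonBy false π)
    {v : V} (hv : v ∈ G.Attr false D) : v ∈ G.WinIn Set.univ false := by
  refine ⟨trivial, tauA G D σD, ?_, ?_⟩
  · intro h u _ ho
    exact ⟨tauA_edge G D σD hσDe h u ho, trivial⟩
  · intro π hπ _ h0 hc
    exact tauA_win G D σD hσDw π hπ (h0 ▸ hv) hc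

/-- Odd wins in `G` wherever Odd wins in the subgame. -/
lemma winB (σD : List V → V → V)
    (hσDe : ∀ h u, G.ownerEven u = false → G.E u (σD h u))
    (hσDw : ∀ π, G.IsPlay π → π 0 ∈ D → G.ConsH false σD π → G.WonBy false π)
    {v : V} (hv : v ∈ G.WinIn (Set.univ \ G.Attr false D) false) :
    v ∈ G.WinIn Set.univ false := by
  obtain ⟨hvW, σS, hSv, hSw⟩ := hv
  refine ⟨trivial, switch (G.Attr false D) (tauA G D σD) σS, ?_, ?_⟩
  · intro h u _ ho
    refine ⟨?_, trivial⟩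
    unfold switch
    split
    · exact tauA_edge G D σD hσDe _ u ho
    · next hx =>
        have hu : u ∉ G.Attr false D := fun hu =>
          hx ⟨h.length, by simp, by rw [getD_concat_self]; exact hu⟩
        exact (hSv h u ⟨trivial, hu⟩ ho).1
  · intro π hπ _ h0 hc
    classical
    by_cases hA : ∃ m, π m ∈ G.Attr false D
    · set n₀ := Nat.find hA with hn₀
      have hmem : π n₀ ∈ G.Attr false D := Nat.find_spec hA
      have hmin : ∀ k < n₀, π k ∉ G.Attr false D := fun k hk => Nat.find_min hA hk
      set ρ : ℕ → V := fun m => π (n₀ + m) with hρ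
      have hρc : G.ConsH false (tauA G D σD) ρ := by
        intro m hown
        have hstep := hc (n₀ + m) hown
        rw [switch_pos (G.Attr false D) (tauA G D σD) σS π (n := n₀ + m) (n₀ := n₀)
          (by omega) hmem hmin] at hstep
        show π (n₀ + m + 1) = _
        rw [hstep]
        congr 1
        rw [show n₀ + m - n₀ = m by omega]
      have := tauA_win G D σD hσDw ρ (isPlay_shift G hπ n₀) (by simpa [hρ] using hmem) hρc
      rw [hρ, wonBy_shift] at this
      exact this
    · push_neg at hA
      have hcS : G.ConsH false σS π := by
        intro m hown
        have := hc m hown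
        rwa [switch_neg _ _ _ π (fun k _ => hA k)] at this
      exact hSw π hπ (fun m => ⟨trivial, hA m⟩) h0 hcS

/-- Outside the attractor, Odd's winning strategy in `G` also wins in the subgame. -/
lemma winF {v : V} (hv : v ∈ G.WinIn Set.univ false) (hvA : v ∉ G.Attr false D) :
    v ∈ G.WinIn (Set.univ \ G.Attr false D) false := by
  obtain ⟨_, σ, hσv, hσw⟩ := hv
  refine ⟨⟨trivial, hvA⟩, σ, ?_, ?_⟩
  · intro h u hu ho
    have he := (hσv h u trivial ho).1
    exact ⟨he, trivial, not_mem_attr_odd G D hu.2 ho he⟩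
  · intro π hπ _ h0 hc
    exact hσw π hπ (fun _ => trivial) h0 hc

/-- Restriction of a strategy to a set. -/
def restrictStrat (W : Set V) (σ : List V → V → V) : List V → V → V :=
  fun h u => if u ∈ W then σ h u else (G.total u).choose

/-- Even wins in `G` wherever Even wins in the subgame. -/
lemma winC {v : V} (hv : v ∈ G.WinIn (Set.univ \ G.Attr false D) true) :
    v ∈ G.WinIn Set.univ true := by
  obtain ⟨hvW, σ, hσv, hσw⟩ := hv
  classical
  refine ⟨trivial, restrictStrat G (Set.univ \ G.Attr false D) σ, ?_, ?_⟩
  · intro h u _ ho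
    refine ⟨?_, trivial⟩
    unfold restrictStrat
    split
    · next hu => exact (hσv h u hu ho).1
    · exact (G.total u).choose_spec
  · intro π hπ _ h0v hc
    have hW : ∀ n, π n ∈ Set.univ \ G.Attr false D := by
      intro n
      induction n with
      | zero => rw [h0v]; exact hvW
      | succ n ih =>
        cases hown : G.ownerEven (π n)
        · exact ⟨trivial, not_mem_attr_odd G D ih.2 hown (hπ n)⟩
        · have hstep := hc n hown
          unfold restrictStrat at hstep
          rw [if_pos ih] at hstep
          rw [hstep]
          exact (hσv (hist π n) (π n) ih hown).2
    have hcσ : G.ConsH true σ π := by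
      intro n hown
      have hstep := hc n hown
      unfold restrictStrat at hstep
      rwa [if_pos (hW n)] at hstep
    exact hσw π hπ hW h0v hcσ

/-- Playing Even's strategy at Even vertices and Odd's at Odd vertices. -/
def interleave (σE σO : List V → V → V) : List V → V → V :=
  fun h u => if G.ownerEven u = true then σE h u else σO h u

/-- No vertex is won by both players. -/
lemma winIn_disjoint {v : V} (hf : v ∈ G.WinIn Set.univ false)
    (ht : v ∈ G.WinIn Set.univ true) : False := by
  obtain ⟨_, σO, hOv, hOw⟩ := hf
  obtain ⟨_, σE, hEv, hEw⟩ := ht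
  set π := buildPlay (interleave G σE σO) v with hπdef
  have hsucc : ∀ n, π (n + 1) =
      if G.ownerEven (π n) = true then σE (hist π n) (π n) else σO (hist π n) (π n) := by
    intro n
    rw [hπdef, buildPlay_succ]
    rfl
  have hplay : G.IsPlay π := by
    intro n
    rw [hsucc n]
    cases hown : G.ownerEven (π n)
    · rw [if_neg (by simp)]
      exact (hOv _ _ trivial hown).1
    · rw [if_pos rfl]
      exact (hEv _ _ trivial hown).1
  have hcE : G.ConsH true σE π := by
    intro n hown
    rw [hsucc n, if_pos hown]
  have hcO : G.ConsH false σO π := by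
    intro n hown
    rw [hsucc n, if_neg (by simp [hown])]
  have h1 := hEw π hplay (fun _ => trivial) rfl hcE
  have h2 := hOw π hplay (fun _ => trivial) rfl hcO
  simp [WonBy] at h1 h2
  exact h2 h1

/-- A successor outside a set. -/
def wSucc (A : Set V) (u : V) : V :=
  if h : ∃ w, G.E u w ∧ w ∉ A then h.choose else (G.total u).choose

lemma wSucc_spec {A : Set V} {u : V} (hex : ∃ w, G.E u w ∧ w ∉ A) :
    G.E u (wSucc G A u) ∧ wSucc G A u ∉ A := by
  unfold wSucc
  rw [dif_pos hex]
  exact hex.choose_spec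

/-- Redirect a strategy away from `A` using `wS`. -/
def protectedStrat (A : Set V) (wS : V → V) (σ : List V → V → V) : List V → V → V :=
  fun h u => if σ h u ∈ A then wS u else σ h u

/-- The deviation function used in the proof that Even's winning region avoids
the attractor. -/
def evilF (σD σ : List V → V → V) (π : ℕ → V) (n : ℕ) : List V → V → V :=
  fun h u => if h.length < n then π (h.length + 1)
    else if G.ownerEven u = true then σ h u else tauA G D σD (h.drop (n + 1)) u

lemma evilF_apply (σD σ : List V → V → V) (π : ℕ → V) (n : ℕ) (ρ : ℕ → V) (m : ℕ) :
    evilF G D σD σ π n (hist ρ m) (ρ m) =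
      if m < n then π (m + 1)
      else if G.ownerEven (ρ m) = true then σ (hist ρ m) (ρ m)
        else tauA G D σD ((hist ρ m).drop (n + 1)) (ρ m) := by
  unfold evilF
  rw [hist_length]

/-- Even's winning strategy in `G` can be converted into one in the subgame. -/
lemma winE (σD : List V → V → V)
    (hσDe : ∀ h u, G.ownerEven u = false → G.E u (σD h u))
    (hσDw : ∀ π, G.IsPlay π → π 0 ∈ D → G.ConsH false σD π → G.WonBy false π)
    {v : V} (hv : v ∈ G.WinIn Set.univ true) (hvA : v ∉ G.Attr false D) :
    v ∈ G.WinIn (Set.univ \ G.Attr false D) true := by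
  obtain ⟨_, σ, hσv, hσw⟩ := hv
  classical
  refine ⟨⟨trivial, hvA⟩,
    protectedStrat (G.Attr false D) (wSucc G (G.Attr false D)) σ, ?_, ?_⟩
  · intro h u hu ho
    unfold protectedStrat
    split
    · have hex := not_mem_attr_even G D hu.2 ho
      have hs := wSucc_spec G hex
      exact ⟨hs.1, trivial, hs.2⟩
    · next hne => exact ⟨(hσv h u trivial ho).1, trivial, hne⟩
  · intro π hπ hπW h0v hc
    have hgood : ∀ m, G.ownerEven (π m) = true → σ (hist π m) (π m) ∉ G.Attr false D := by
      by_contra hbad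
      push_neg at hbad
      obtain ⟨m₀, hm₀o, hm₀A⟩ := hbad
      have hbad' : ∃ m, G.ownerEven (π m) = true ∧ σ (hist π m) (π m) ∈ G.Attr false D :=
        ⟨m₀, hm₀o, hm₀A⟩
      set n := Nat.find hbad' with hndef
      have hn := Nat.find_spec hbad'
      rw [← hndef] at hn
      have hmin : ∀ k < n, ¬(G.ownerEven (π k) = true ∧
          σ (hist π k) (π k) ∈ G.Attr false D) := fun k hk => Nat.find_min hbad' hk
      set ρ := buildPlay (evilF G D σD σ π n) v with hρdef
      have hρ0 : ρ 0 = v := rfl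
      have hsucc : ∀ m, ρ (m + 1) =
          if m < n then π (m + 1)
          else if G.ownerEven (ρ m) = true then σ (hist ρ m) (ρ m)
            else tauA G D σD ((hist ρ m).drop (n + 1)) (ρ m) := by
        intro m
        rw [hρdef, buildPlay_succ, evilF_apply]
      have hρπ : ∀ m ≤ n, ρ m = π m := by
        intro m hm
        cases m with
        | zero => rw [hρ0, h0v]
        | succ m => rw [hsucc m, if_pos (by omega)]
      have hhist : ∀ m ≤ n, hist ρ m = hist π m := fun m hm =>
        hist_congr (fun k hk => hρπ k (by omega))
      have hρn1 : ρ (n + 1) = σ (hist π n) (π n) := by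
        rw [hsucc n, if_neg (by omega), hρπ n le_rfl, hhist n le_rfl, if_pos hn.1]
      have hplay : G.IsPlay ρ := by
        intro m
        rcases lt_trichotomy m n with hm | hm | hm
        · rw [hρπ m (by omega), hsucc m, if_pos hm]
          exact hπ m
        · rw [hm, hρπ n le_rfl, hρn1]
          exact (hσv (hist π n) (π n) trivial hn.1).1
        · rw [hsucc m, if_neg (by omega)]
          cases hown : G.ownerEven (ρ m)
          · rw [if_neg (by simp)]
            exact tauA_edge G D σD hσDe _ _ hown
          · rw [if_pos rfl]
            exact (hσv _ _ trivial hown).1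
      have hcσ : G.ConsH true σ ρ := by
        intro m hown
        rcases lt_trichotomy m n with hm | hm | hm
        · rw [hsucc m, if_pos hm, hhist m (by omega), hρπ m (by omega)]
          have hownπ : G.ownerEven (π m) = true := by
            rw [← hρπ m (by omega)]; exact hown
          have hstep := hc m hownπ
          unfold protectedStrat at hstep
          have hnA : σ (hist π m) (π m) ∉ G.Attr false D := fun hmem =>
            hmin m hm ⟨hownπ, hmem⟩
          rw [if_neg hnA] at hstep
          exact hstep
        · rw [hm, hρn1, hhist n le_rfl, hρπ n le_rfl]
        · rw [hsucc m, if_neg (by omega), if_pos hown]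
      have hwρ : G.WonBy true ρ := hσw ρ hplay (fun _ => trivial) hρ0 hcσ
      set θ : ℕ → V := fun m => ρ (n + 1 + m) with hθ
      have hθ0 : θ 0 ∈ G.Attr false D := by
        show ρ (n + 1 + 0) ∈ _
        rw [show n + 1 + 0 = n + 1 from rfl, hρn1]
        exact hn.2
      have hθc : G.ConsH false (tauA G D σD) θ := by
        intro m hown
        show ρ (n + 1 + m + 1) = _
        rw [hsucc (n + 1 + m), if_neg (by omega), if_neg (by simp [show
          G.ownerEven (ρ (n + 1 + m)) = false from hown])]
        rw [hist_drop ρ (by omega : n + 1 ≤ n + 1 + m)]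
        congr 1
        rw [show n + 1 + m - (n + 1) = m by omega]
      have hwθ := tauA_win G D σD hσDw θ (isPlay_shift G hplay (n + 1)) hθ0 hθc
      rw [hθ, wonBy_shift] at hwθ
      simp [WonBy] at hwρ hwθ
      exact hwθ hwρ
    have hcσ : G.ConsH true σ π := by
      intro m hown
      have hstep := hc m hown
      unfold protectedStrat at hstep
      rwa [if_neg (hgood m hown)] at hstep
    exact hσw π hπ (fun _ => trivial) h0v hcσ

end PGAux

/-- removing the Odd-attractor `A` of an Odd-dominion decomposes the
winning regions: `W_Odd(G) = A ∪ W_Odd(G ∖ A)` and `W_Even(G) = W_Even(G ∖ A)`. -/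
theorem winning_regions_decompose_along_dominion_attractor
    {V : Type*} [Fintype V] [DecidableEq V] (G : ParityGame V) (D : Set V)
    (hD : G.IsDominion false D) :
    G.WinIn Set.univ false =
      G.Attr false D ∪ G.WinIn (Set.univ \ G.Attr false D) false ∧
    G.WinIn Set.univ true = G.WinIn (Set.univ \ G.Attr false D) true := by
  obtain ⟨σD, hσDv, hσDw'⟩ := hD
  have hσDe : ∀ h u, G.ownerEven u = false → G.E u (σD h u) :=
    fun h u ho => (hσDv h u trivial ho).1
  have hσDw : ∀ π, G.IsPlay π → π 0 ∈ D → G.ConsH false σD π → G.WonBy false π :=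
    fun π hπ h0 hc => (hσDw' π hπ (fun _ => trivial) h0 hc).2
  constructor
  · apply Set.Subset.antisymm
    · intro v hv
      by_cases hvA : v ∈ G.Attr false D
      · exact Or.inl hvA
      · exact Or.inr (PGAux.winF G D hv hvA)
    · rintro v (hv | hv)
      · exact PGAux.attr_subset_winIn G D σD hσDe hσDw hv
      · exact PGAux.winB G D σD hσDe hσDw hv
  · apply Set.Subset.antisymm
    · intro v hv
      have hvA : v ∉ G.Attr false D := fun hA =>
        PGAux.winIn_disjoint G (PGAux.attr_subset_winIn G D σD hσDe hσDw hA) hv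
      exact PGAux.winE G D σD hσDe hσDw hv hvA
    · intro v hv
      exact PGAux.winC G D hv

end
end

section
/- Let G be a parity game, let B ⊆ V be an Odd-dominion in G, and let W ⊆ V ∖ B be a set such that every vertex of W has at least one successor in W (so the subgame G ∩ W induced on W is a parity game) and such that every v ∈ W ∩ V_Even satisfies post(v) ⊆ W ∪ B. If D ⊆ W is an Odd-dominion in the subgame G ∩ W, then D ∪ B is an Odd-dominion in G. -/
open Classical

noncomputable section

open ParityGame

section AuxLemmas

namespace PGAux
variable {V : Type*}

/-- History-list sequence for a recursively constructed play. -/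
def build (step : ℕ → List V → V) : ℕ → List V
  | 0 => []
  | n+1 => build step n ++ [step n (build step n)]

/-- A play constructed recursively from its history. -/
def play (step : ℕ → List V → V) (n : ℕ) : V := step n (build step n)

lemma build_succ (step : ℕ → List V → V) (n : ℕ) :
    build step (n+1) = build step n ++ [play step n] := rfl

lemma hist_play (step : ℕ → List V → V) (n : ℕ) :
    List.ofFn (fun k : Fin n => play step (k : ℕ)) = build step n := by
  induction n with
  | zero => simp [build]
  | succ n ih =>
    rw [List.ofFn_succ', build_succ, ← ih]
    simp [List.concat_eq_append]

lemma hist_getElem_s18 (π : ℕ → V) (n i : ℕ) :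
    (List.ofFn (fun k : Fin n => π (k : ℕ)))[i]? = if i < n then some (π i) else none := by
  rw [List.getElem?_ofFn]
  split <;> simp_all

lemma hist_shift (π : ℕ → V) (a n : ℕ) :
    (List.ofFn (fun k : Fin (a + n) => π (k : ℕ))).drop a =
      List.ofFn (fun k : Fin n => π (a + (k : ℕ))) := by
  rw [List.ofFn_add]
  rw [List.drop_left' (by simp)]
  rfl

end PGAux

lemma hist_build {V : Type*} (step : ℕ → List V → V) (n : ℕ) :
    ParityGame.hist (PGAux.play step) n = PGAux.build step n := PGAux.hist_play step n

lemma hist_getElem' {V : Type*} (π : ℕ → V) (n i : ℕ) :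
    (ParityGame.hist π n)[i]? = if i < n then some (π i) else none := PGAux.hist_getElem_s18 π n i

lemma hist_drop {V : Type*} (π : ℕ → V) (a n : ℕ) :
    (ParityGame.hist π (a + n)).drop a = ParityGame.hist (fun m => π (a + m)) n :=
  PGAux.hist_shift π a n

lemma infOft_shift {V : Type*} [Fintype V] [DecidableEq V] (G : ParityGame V)
    (π : ℕ → V) (a p : ℕ) :
    G.InfOft (fun m => π (a + m)) p ↔ G.InfOft π p := by
  constructor
  · intro h N
    obtain ⟨n, hn, hp⟩ := h N
    exact ⟨a + n, le_trans hn (Nat.le_add_left n a), hp⟩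
  · intro h N
    obtain ⟨n, hn, hp⟩ := h (a + N)
    refine ⟨n - a, by omega, ?_⟩
    have he : a + (n - a) = n := by omega
    simpa [he] using hp

lemma wonByEven_shift {V : Type*} [Fintype V] [DecidableEq V] (G : ParityGame V)
    (π : ℕ → V) (a : ℕ) :
    G.WonByEven (fun m => π (a + m)) ↔ G.WonByEven π := by
  unfold ParityGame.WonByEven
  have h : {p | G.InfOft (fun m => π (a + m)) p} = {p | G.InfOft π p} :=
    Set.ext fun p => infOft_shift G π a p
  rw [h]

end AuxLemmas

/-- if `B` is an Odd-dominion, `W ⊆ V ∖ B` induces a subgame such that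
Even can only leave `W` into `B`, and `D ⊆ W` is an Odd-dominion of the subgame
`G ∩ W`, then `D ∪ B` is an Odd-dominion of `G`. -/
theorem subgame_dominion_union_dominion
    {V : Type*} [Fintype V] [DecidableEq V] (G : ParityGame V) (B W D : Set V)
    (hB : G.IsDominion false B)
    (hWB : W ⊆ Set.univ \ B)
    (hWtot : ∀ v ∈ W, ∃ w, G.E v w ∧ w ∈ W)
    (hWeven : ∀ v ∈ W, G.ownerEven v = true → ∀ w, G.E v w → w ∈ W ∪ B)
    (hDW : D ⊆ W)
    (hDdom : G.IsDominionIn W false D) :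
    G.IsDominion false (D ∪ B) := by
  obtain ⟨σB, hσBv, hσBd⟩ := hB
  obtain ⟨σD, hσDv, hσDd⟩ := hDdom
  classical
  set σ : List V → V → V := fun h v =>
    if hf : ∃ i : ℕ, ∃ x : V, h[i]? = some x ∧ x ∈ B then σB (h.drop (Nat.find hf)) v
    else if v ∈ B then σB [] v
    else if v ∈ W then σD h v
    else (G.total v).choose with hσ
  have hσD_eq : ∀ (h : List V) (v : V), (¬∃ i : ℕ, ∃ x : V, h[i]? = some x ∧ x ∈ B) →
      v ∉ B → v ∈ W → σ h v = σD h v := by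
    intro h v h1 h2 h3
    simp only [hσ]
    rw [dif_neg h1, if_neg h2, if_pos h3]
  refine ⟨σ, ?_, ?_⟩
  · intro h u _ hu
    refine ⟨?_, trivial⟩
    simp only [hσ]
    split_ifs with h1 h2 h3
    · exact (hσBv _ u trivial hu).1
    · exact (hσBv _ u trivial hu).1
    · exact (hσDv h u h3 hu).1
    · exact (G.total u).choose_spec
  · intro π hplay hall h0 hcons
    have h0' : π 0 ∈ D ∨ π 0 ∈ B := h0
    have hnoB : ∀ n, (∀ k, k < n → π k ∉ B) →
        ¬∃ i : ℕ, ∃ x : V, (ParityGame.hist π n)[i]? = some x ∧ x ∈ B := by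
      rintro n hk ⟨i, x, hx, hxB⟩
      rw [hist_getElem'] at hx
      by_cases hi : i < n
      · rw [if_pos hi] at hx
        injection hx with hx'
        rw [← hx'] at hxB
        exact hk i hi hxB
      · rw [if_neg hi] at hx
        cases hx
    by_cases hBex : ∃ n, π n ∈ B
    case neg =>
      push_neg at hBex
      have hWall : ∀ n, π n ∈ W := by
        intro n
        induction n with
        | zero => exact hDW (h0'.resolve_right (hBex 0))
        | succ k ih =>
          cases hc : G.ownerEven (π k) with
          | true =>
            rcases hWeven _ ih hc _ (hplay k) with hw | hb
            · exact hw
            · exact absurd hb (hBex (k+1))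
          | false =>
            have hc2 := hcons k hc
            rw [hσD_eq _ _ (hnoB k (fun j _ => hBex j)) (hBex k) ih] at hc2
            rw [hc2]
            exact (hσDv _ _ ih hc).2
      have hconsD : G.ConsH false σD π := by
        intro n ho
        rw [hcons n ho, hσD_eq _ _ (hnoB n (fun j _ => hBex j)) (hBex n) (hWall n)]
      obtain ⟨hDall, hwon⟩ := hσDd π hplay hWall (h0'.resolve_right (hBex 0)) hconsD
      exact ⟨fun n => Set.mem_union_left B (hDall n), hwon⟩
    case pos =>
      set n0 := Nat.find hBex with hn0def
      have hn0B : π n0 ∈ B := Nat.find_spec hBex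
      have hn0min : ∀ m, m < n0 → π m ∉ B := fun m hm => Nat.find_min hBex hm
      have hWpre : ∀ m, m < n0 → π m ∈ W := by
        intro m
        induction m with
        | zero => intro h; exact hDW (h0'.resolve_right (hn0min 0 h))
        | succ k ih =>
          intro hk1
          have hk : k < n0 := lt_trans (Nat.lt_succ_self k) hk1
          have ihk := ih hk
          cases hc : G.ownerEven (π k) with
          | true =>
            rcases hWeven _ ihk hc _ (hplay k) with hw | hb
            · exact hw
            · exact absurd hb (hn0min _ hk1)
          | false =>
            have hc2 := hcons k hc
            rw [hσD_eq _ _ (hnoB k (fun j hj => hn0min j (lt_trans hj hk))) (hn0min k hk) ihk] at hc2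
            rw [hc2]
            exact (hσDv _ _ ihk hc).2
      have htail : ∀ n, σ (ParityGame.hist π (n0 + n)) (π (n0 + n)) =
          σB (ParityGame.hist (fun m => π (n0 + m)) n) (π (n0 + n)) := by
        intro n
        cases n with
        | zero =>
          simp only [hσ, Nat.add_zero]
          rw [dif_neg (hnoB n0 hn0min), if_pos hn0B]
          have he : ParityGame.hist (fun m => π (n0 + m)) 0 = ([] : List V) := by
            simp [ParityGame.hist]
          rw [he]
        | succ k =>
          have hf : ∃ i : ℕ, ∃ x : V, (ParityGame.hist π (n0 + (k+1)))[i]? = some x ∧ x ∈ B := by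
            refine ⟨n0, π n0, ?_, hn0B⟩
            rw [hist_getElem', if_pos (by omega)]
          simp only [hσ]
          rw [dif_pos hf]
          have hfind : Nat.find hf = n0 := by
            have h1 : Nat.find hf ≤ n0 :=
              Nat.find_min' hf ⟨π n0, by rw [hist_getElem', if_pos (by omega)], hn0B⟩
            have h2 : ¬ Nat.find hf < n0 := by
              intro hlt
              obtain ⟨x, hx, hxB⟩ := Nat.find_spec hf
              rw [hist_getElem', if_pos (by omega)] at hx
              injection hx with hx'
              rw [← hx'] at hxB
              exact hn0min _ hlt hxB
            omega
          rw [hfind, hist_drop]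
      have hconsB : G.ConsH false σB (fun m => π (n0 + m)) := by
        intro n ho
        show π ((n0 + n) + 1) = _
        rw [hcons (n0 + n) ho, htail n]
      obtain ⟨hBall, hwonB⟩ := hσBd (fun m => π (n0 + m))
        (fun n => hplay (n0 + n)) (fun _ => trivial) hn0B hconsB
      have hpre : ∀ m, m < n0 → π m ∈ D := by
        intro m hm
        have hn0pos : 0 < n0 := by omega
        set step : ℕ → List V → V := fun n h =>
          if n < n0 then π n
          else if hv : h.getLastD (π 0) ∈ W then
            (if G.ownerEven (h.getLastD (π 0)) = false then σD h.dropLast (h.getLastD (π 0))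
             else (hWtot _ hv).choose)
          else h.getLastD (π 0)
          with hstep
        set τ : ℕ → V := PGAux.play step with hτ
        have ht1 : ∀ k, k < n0 → τ k = π k := by
          intro k hk
          show step k (PGAux.build step k) = π k
          simp only [hstep]
          rw [if_pos hk]
        have hhist : ∀ n, ParityGame.hist τ n = PGAux.build step n := by
          intro n
          rw [hτ]
          exact hist_build step n
        have hsucc : ∀ k, ¬(k+1 < n0) → τ (k+1) =
            if hv : τ k ∈ W then
              (if G.ownerEven (τ k) = false then σD (ParityGame.hist τ k) (τ k)
               else (hWtot _ hv).choose)
            else τ k := by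
          intro k hk
          show step (k+1) (PGAux.build step (k+1)) = _
          rw [PGAux.build_succ, ← hτ]
          simp only [hstep]
          rw [if_neg hk, List.getLastD_concat, List.dropLast_concat, ← hhist k]
        have ht3 : ∀ n, τ n ∈ W := by
          intro n
          induction n with
          | zero => rw [ht1 0 hn0pos]; exact hWpre 0 hn0pos
          | succ k ih =>
            by_cases hk : k+1 < n0
            · rw [ht1 _ hk]; exact hWpre _ hk
            · rw [hsucc k hk, dif_pos ih]
              split_ifs with ho
              · exact (hσDv _ _ ih ho).2
              · exact (hWtot _ ih).choose_spec.2
        have ht4 : G.IsPlay τ := by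
          intro n
          by_cases hk : n+1 < n0
          · rw [ht1 _ hk, ht1 _ (by omega)]; exact hplay n
          · rw [hsucc n hk, dif_pos (ht3 n)]
            split_ifs with ho
            · exact (hσDv _ _ (ht3 n) ho).1
            · exact (hWtot _ (ht3 n)).choose_spec.1
        have ht5 : G.ConsH false σD τ := by
          intro n ho
          by_cases hk : n+1 < n0
          · have hn : n < n0 := by omega
            have hhe : ParityGame.hist τ n = ParityGame.hist π n := by
              unfold ParityGame.hist
              congr 1
              funext j
              exact ht1 _ (lt_trans j.2 hn)
            rw [ht1 _ hn] at ho
            rw [ht1 _ hk, hhe, ht1 _ hn, hcons n ho,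
              hσD_eq _ _ (hnoB n (fun j hj => hn0min j (by omega))) (hn0min n hn) (hWpre n hn)]
          · rw [hsucc n hk, dif_pos (ht3 n), if_pos ho]
        obtain ⟨hDall, -⟩ := hσDd τ ht4 ht3
          (by rw [ht1 0 hn0pos]; exact h0'.resolve_right (hn0min 0 hn0pos)) ht5
        rw [← ht1 m hm]
        exact hDall m
      constructor
      · intro n
        rcases lt_or_ge n n0 with h | h
        · exact Set.mem_union_left B (hpre n h)
        · refine Set.mem_union_right D ?_
          have hb := hBall (n - n0)
          have he : n0 + (n - n0) = n := by omega
          simpa [he] using hb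
      · have hiff := wonByEven_shift G π n0
        simp only [ParityGame.WonBy, Bool.false_eq_true, if_false] at hwonB ⊢
        exact fun hw => hwonB (hiff.mpr hw)

end
end
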